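/- arXiv:2012.01995 — 3 statements merged into one kernel-verified Lean document; each statement's English description precedes it below -/
import Mathlib

section
/- For every n ≥ 1, the multicritical parameters θ_i = (-1)^{i+1} (n-1)! (n+1)! / ((n-i)! (n+i)!) for i = 1,...,n satisfy the moment condition: the sum over i = 1,...,n of i^{2k} θ_i equals (n+1)/(2n) when k = 0, and equals 0 for every k with 1 ≤ k ≤ n-1. -/
open scoped BigOperators

open Finset

lemma key_diff : ∀ k m : ℕ, k < m →
    ∑ j ∈ Finset.range (m + 1), (-1 : ℝ) ^ j * (m.choose j : ℝ) * (j : ℝ) ^ k = 0 := by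
  intro k
  induction k using Nat.strong_induction_on with
  | _ k ihk =>
    intro m hk
    match k with
    | 0 =>
      have h := Int.alternating_sum_range_choose_of_ne (n := m) (by omega)
      have h2 : (∑ j ∈ range (m+1), ((-1:ℝ)^j * m.choose j)) = 0 := by exact_mod_cast h
      simpa using h2
    | k + 1 =>
      obtain ⟨M, rfl⟩ : ∃ M, m = M + 1 := ⟨m - 1, by omega⟩
      rw [Finset.sum_range_succ']
      have hz : (-1 : ℝ) ^ 0 * ((M+1).choose 0 : ℝ) * ((0:ℕ) : ℝ) ^ (k+1) = 0 := by simp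
      rw [hz, add_zero]
      have hterm : ∀ j, (-1 : ℝ) ^ (j+1) * ((M+1).choose (j+1) : ℝ) * ((j+1 : ℕ) : ℝ) ^ (k+1)
          = ∑ l ∈ range (k+1), (-(M+1 : ℝ)) * (k.choose l : ℝ) *
              ((-1 : ℝ) ^ j * (M.choose j : ℝ) * (j : ℝ) ^ l) := by
        intro j
        have hc : ((M+1).choose (j+1) : ℝ) * ((j : ℝ) + 1) = (M+1 : ℝ) * (M.choose j : ℝ) := by
          exact_mod_cast congrArg (Nat.cast : ℕ → ℝ) (Nat.add_one_mul_choose_eq M j).symm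
        have hpow : ((j : ℝ) + 1) ^ k = ∑ l ∈ range (k+1), (j : ℝ) ^ l * 1 ^ (k - l) * (k.choose l : ℝ) :=
          add_pow (j : ℝ) 1 k
        push_cast
        rw [pow_succ (-1 : ℝ) j, pow_succ ((j:ℝ)+1) k]
        calc (-1:ℝ)^j * -1 * ((M+1).choose (j+1) : ℝ) * (((j:ℝ)+1)^k * ((j:ℝ)+1))
            = (-1:ℝ)^j * -1 * (((M+1).choose (j+1) : ℝ) * ((j:ℝ)+1)) * ((j:ℝ)+1)^k := by ring
          _ = (-1:ℝ)^j * -1 * ((M+1:ℝ) * (M.choose j : ℝ)) * ((j:ℝ)+1)^k := by rw [hc]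
          _ = _ := by
              rw [hpow, Finset.mul_sum]
              exact Finset.sum_congr rfl fun l _ => by ring
      calc ∑ j ∈ range (M+1), (-1 : ℝ) ^ (j+1) * ((M+1).choose (j+1) : ℝ) * ((j+1 : ℕ) : ℝ) ^ (k+1)
          = ∑ j ∈ range (M+1), ∑ l ∈ range (k+1), (-(M+1 : ℝ)) * (k.choose l : ℝ) *
              ((-1 : ℝ) ^ j * (M.choose j : ℝ) * (j : ℝ) ^ l) := by
            exact Finset.sum_congr rfl fun j _ => hterm j
        _ = ∑ l ∈ range (k+1), (-(M+1 : ℝ)) * (k.choose l : ℝ) *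
              ∑ j ∈ range (M+1), ((-1 : ℝ) ^ j * (M.choose j : ℝ) * (j : ℝ) ^ l) := by
            rw [Finset.sum_comm]
            exact Finset.sum_congr rfl fun l _ => by rw [Finset.mul_sum]
        _ = 0 := by
            apply Finset.sum_eq_zero
            intro l hl
            simp only [Finset.mem_range] at hl
            rw [ihk l (by omega) M (by omega), mul_zero]

lemma sumB (n k : ℕ) (hn : 1 ≤ n) (hk : k ≤ n - 1) :
    ∑ i ∈ Finset.Icc 1 n, (-1:ℝ)^(i+1) * (((2*n).choose (n+i)) : ℝ) * (i:ℝ)^(2*k)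
      = ((2*n).choose n : ℝ) * (0:ℝ)^(2*k) / 2 := by
  set f : ℕ → ℝ := fun j => (-1:ℝ)^j * (((2*n).choose j) : ℝ) * ((j:ℝ) - n)^(2*k) with hf
  have h0 : ∑ j ∈ range (2*n+1), f j = 0 := by
    have hexp : ∀ j, f j = ∑ l ∈ range (2*k+1),
        ((-1:ℝ)^j * ((2*n).choose j : ℝ) * (j:ℝ)^l) * ((-(n:ℝ))^(2*k-l) * ((2*k).choose l : ℝ)) := by
      intro j
      rw [hf]
      simp only
      rw [show (j:ℝ) - n = (j:ℝ) + (-(n:ℝ)) by ring, add_pow, Finset.mul_sum]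
      exact Finset.sum_congr rfl fun l _ => by ring
    calc ∑ j ∈ range (2*n+1), f j
        = ∑ l ∈ range (2*k+1), (∑ j ∈ range (2*n+1),
            (-1:ℝ)^j * ((2*n).choose j : ℝ) * (j:ℝ)^l) * ((-(n:ℝ))^(2*k-l) * ((2*k).choose l : ℝ)) := by
          rw [Finset.sum_congr rfl fun j _ => hexp j, Finset.sum_comm]
          exact Finset.sum_congr rfl fun l _ => by rw [Finset.sum_mul]
      _ = 0 := Finset.sum_eq_zero fun l hl => by
          simp only [Finset.mem_range] at hl
          rw [key_diff l (2*n) (by omega), zero_mul]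
  have hsplit : ∑ j ∈ range (2*n+1), f j
      = (∑ i ∈ range n, f (n-1-i)) + (f n + ∑ i ∈ range n, f (n+1+i)) := by
    rw [show 2*n+1 = n + (n+1) by ring, Finset.sum_range_add, Finset.sum_range_reflect]
    congr 1
    rw [Finset.sum_range_succ']
    rw [add_comm]
    congr 1
    · exact Finset.sum_congr rfl fun i _ => by rw [show n + (i+1) = n+1+i by ring]
  have hpair : ∀ i ∈ range n, f (n-1-i) = f (n+1+i) := by
    intro i hi
    simp only [Finset.mem_range] at hi
    rw [hf]
    simp only
    have e1 : n+1+i = (n-1-i) + 2*(i+1) := by omega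
    have e2 : (2*n).choose (n-1-i) = (2*n).choose (n+1+i) := by
      rw [← Nat.choose_symm (show n+1+i ≤ 2*n by omega), show 2*n - (n+1+i) = n-1-i by omega]
    have e3 : ((n-1-i : ℕ):ℝ) - n = -((i:ℝ)+1) := by
      have h1 : (1+i) ≤ n := by omega
      rw [show n-1-i = n-(1+i) by omega, Nat.cast_sub h1]
      push_cast; ring
    have e4 : ((n+1+i : ℕ):ℝ) - n = (i:ℝ)+1 := by push_cast; ring
    rw [e2, e3, e4, Even.neg_pow (even_two_mul k)]
    rw [e1, pow_add, pow_mul]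
    norm_num
  have hmid : f n = ((2*n).choose n : ℝ) * (0:ℝ)^(2*k) * (-1:ℝ)^n := by
    rw [hf]; simp only; rw [sub_self]; ring
  have hS : ∑ i ∈ Finset.Icc 1 n, (-1:ℝ)^(i+1) * (((2*n).choose (n+i)) : ℝ) * (i:ℝ)^(2*k)
      = ∑ i ∈ range n, (-1:ℝ)^i * (((2*n).choose (n+1+i)) : ℝ) * ((i:ℝ)+1)^(2*k) := by
    rw [← Finset.Ico_add_one_right_eq_Icc, Finset.sum_Ico_eq_sum_range]
    apply Finset.sum_congr rfl
    intro i _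
    rw [show 1+i+1 = i+2 by ring, pow_add, show n+(1+i) = n+1+i by ring]
    push_cast; ring
  have hright : ∀ i ∈ range n, f (n+1+i)
      = (-1:ℝ)^(n+1) * ((-1:ℝ)^i * (((2*n).choose (n+1+i)) : ℝ) * ((i:ℝ)+1)^(2*k)) := by
    intro i _
    rw [hf]
    simp only
    have e4 : ((n+1+i : ℕ):ℝ) - n = (i:ℝ)+1 := by push_cast; ring
    rw [e4, show n+1+i = (n+1)+i by ring, pow_add]
    ring
  rw [hsplit, Finset.sum_congr rfl hpair, hmid,
    Finset.sum_congr rfl hright, ← Finset.mul_sum, ← hS] at h0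
  set S := ∑ i ∈ Finset.Icc 1 n, (-1:ℝ)^(i+1) * (((2*n).choose (n+i)) : ℝ) * (i:ℝ)^(2*k) with hSdef
  set C := ((2*n).choose n : ℝ) * (0:ℝ)^(2*k) with hC
  rcases Nat.even_or_odd n with he | ho
  · rw [Even.neg_one_pow he, Odd.neg_one_pow (Even.add_one he)] at h0
    linarith
  · rw [Odd.neg_one_pow ho, Even.neg_one_pow (Odd.add_one ho)] at h0
    linarith

/-- the odd-even multicritical parameters
`θ_i = (-1)^(i+1) (n-1)! (n+1)! / ((n-i)! (n+i)!)` for `i = 1,…,n` satisfy the moment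
conditions `∑ θ_i = (n+1)/(2n)` and `∑ i^(2k) θ_i = 0` for `1 ≤ k ≤ n-1`. -/
theorem multicritical_oe_moments (n : ℕ) (hn : 1 ≤ n)
    (θ : ℕ → ℝ)
    (hθ : ∀ i, 1 ≤ i → i ≤ n →
      θ i = (-1 : ℝ) ^ (i + 1) * ((n - 1).factorial : ℝ) * ((n + 1).factorial : ℝ) /
        (((n - i).factorial : ℝ) * ((n + i).factorial : ℝ))) :
    (∑ i ∈ Finset.Icc 1 n, θ i = (n + 1) / (2 * n)) ∧
    (∀ k : ℕ, 1 ≤ k → k ≤ n - 1 →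
      ∑ i ∈ Finset.Icc 1 n, (i : ℝ) ^ (2 * k) * θ i = 0) := by
  set c : ℝ := ((n-1).factorial : ℝ) * ((n+1).factorial : ℝ) / ((2*n).factorial : ℝ) with hc
  have hθ' : ∀ i ∈ Finset.Icc 1 n, θ i = (-1:ℝ)^(i+1) * (((2*n).choose (n+i)) : ℝ) * c := by
    intro i hi
    simp only [Finset.mem_Icc] at hi
    rw [hθ i hi.1 hi.2, hc]
    have hfac : ((2*n).choose (n+i) : ℝ) * (((n+i).factorial : ℝ) * ((n-i).factorial : ℝ))
        = ((2*n).factorial : ℝ) := by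
      have h := Nat.choose_mul_factorial_mul_factorial (show n+i ≤ 2*n by omega)
      rw [show 2*n - (n+i) = n - i by omega] at h
      push_cast [← h]
      ring
    have h1 : (((n-i).factorial : ℕ) : ℝ) ≠ 0 := Nat.cast_ne_zero.mpr (Nat.factorial_ne_zero _)
    have h2 : (((n+i).factorial : ℕ) : ℝ) ≠ 0 := Nat.cast_ne_zero.mpr (Nat.factorial_ne_zero _)
    have h3 : (((2*n).factorial : ℕ) : ℝ) ≠ 0 := Nat.cast_ne_zero.mpr (Nat.factorial_ne_zero _)
    field_simp
    linear_combination (-1:ℝ) * hfac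
  have hgen : ∀ k : ℕ, k ≤ n - 1 →
      ∑ i ∈ Finset.Icc 1 n, (i : ℝ) ^ (2 * k) * θ i
        = ((2*n).choose n : ℝ) * (0:ℝ)^(2*k) / 2 * c := by
    intro k hk
    calc ∑ i ∈ Finset.Icc 1 n, (i : ℝ) ^ (2 * k) * θ i
        = ∑ i ∈ Finset.Icc 1 n, ((-1:ℝ)^(i+1) * (((2*n).choose (n+i)) : ℝ) * (i:ℝ)^(2*k)) * c := by
          apply Finset.sum_congr rfl
          intro i hi
          rw [hθ' i hi]; ring
      _ = (∑ i ∈ Finset.Icc 1 n, (-1:ℝ)^(i+1) * (((2*n).choose (n+i)) : ℝ) * (i:ℝ)^(2*k)) * c :=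
          (Finset.sum_mul _ _ _).symm
      _ = ((2*n).choose n : ℝ) * (0:ℝ)^(2*k) / 2 * c := by rw [sumB n k hn hk]
  constructor
  · have h0 := hgen 0 (by omega)
    have heq : ∑ i ∈ Finset.Icc 1 n, θ i = ((2*n).choose n : ℝ) * (0:ℝ)^(2*0) / 2 * c := by
      rw [← h0]; apply Finset.sum_congr rfl; intro i _; simp
    rw [heq, hc]
    norm_num
    have hcc : ((2*n).choose n : ℝ) * ((n.factorial:ℝ) * (n.factorial:ℝ)) = ((2*n).factorial : ℝ) := by
      have h := Nat.choose_mul_factorial_mul_factorial (show n ≤ 2*n by omega)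
      rw [show 2*n - n = n by omega] at h
      push_cast [← h]; ring
    have hfn : (n.factorial : ℝ) = n * ((n-1).factorial : ℝ) := by
      exact_mod_cast congrArg (Nat.cast : ℕ → ℝ) (Nat.mul_factorial_pred (by omega)).symm
    have hfn1 : ((n+1).factorial : ℝ) = (n+1) * (n.factorial : ℝ) := by
      rw [Nat.factorial_succ]; push_cast; ring
    have h3 : (((2*n).factorial : ℕ) : ℝ) ≠ 0 := Nat.cast_ne_zero.mpr (Nat.factorial_ne_zero _)
    have hn0 : (n:ℝ) ≠ 0 := Nat.cast_ne_zero.mpr (by omega)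
    rw [← hcc, hfn1, hfn]
    have hC0 : ((2*n).choose n : ℝ) ≠ 0 := Nat.cast_ne_zero.mpr (Nat.choose_pos (by omega)).ne'
    have hf0 : ((n-1).factorial : ℝ) ≠ 0 := Nat.cast_ne_zero.mpr (Nat.factorial_ne_zero _)
    field_simp
  · intro k hk1 hk2
    rw [hgen k hk2, zero_pow (by omega : 2*k ≠ 0)]
    ring
end

section
/- For every n ≥ 1, the odd multicritical parameters θ_{2i-1} = (-1)^{i+1} (n-1)! n! / ((2i-1) (n-i)! (n+i-1)!) for i = 1,...,n satisfy: ∑_{i=1}^n (2i-1)^{2k} θ_{2i-1} = 0 for all 1 ≤ k ≤ n-1, and ∑_{i=1}^n θ_{2i-1} = 2^{4n-2} / (n · C(2n,n)^2), where C(2n,n) is the central binomial coefficient. -/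
open scoped BigOperators
open Finset Polynomial


theorem prodIcc_id (m : ℕ) : ∏ x ∈ Icc 1 m, x = m.factorial := by
  rw [← Finset.Ico_add_one_right_eq_Icc, Finset.prod_Ico_id_eq_factorial]

theorem L1 (a : ℕ) : ∀ m : ℕ, a.factorial * ∏ j ∈ Icc 1 m, (a + j) = (a + m).factorial := by
  intro m
  induction m with
  | zero => simp
  | succ m ih =>
    rw [Finset.prod_Icc_succ_top (by omega), ← mul_assoc, ih]
    rw [show a + (m+1) = (a + m) + 1 by ring, Nat.factorial_succ]
    ring

theorem L2 (m : ℕ) : ∏ j ∈ Icc 1 m, (m + 1 - j) = m.factorial := by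
  rw [← prodIcc_id]
  apply Finset.prod_nbij' (fun j => m + 1 - j) (fun j => m + 1 - j)
  · intro a ha; simp only [mem_Icc] at *; omega
  · intro a ha; simp only [mem_Icc] at *; omega
  · intro a ha; simp only [mem_Icc] at *; omega
  · intro a ha; simp only [mem_Icc] at *; omega
  · intro a ha; rfl

theorem LC : ∀ n : ℕ, 2^n * n.factorial * ∏ i ∈ Icc 1 n, (2*i-1) = (2*n).factorial := by
  intro n
  induction n with
  | zero => simp
  | succ n ih =>
    have e1 : (2*(n+1)).factorial = (2*(n+1)) * ((2*n+1) * (2*n).factorial) := by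
      rw [show 2*(n+1) = 2*n+1+1 by ring, Nat.factorial_succ, Nat.factorial_succ]
    rw [Finset.prod_Icc_succ_top (by omega), e1, ← ih, show 2*(n+1)-1 = 2*n+1 by omega,
      pow_succ, Nat.factorial_succ]
    ring

theorem LA (m : ℕ) : m.factorial * ∏ j ∈ Icc 1 m, ((2*m+1)^2 - (2*j-1)^2)
    = 4^m * m.factorial * (2*m).factorial := by
  have h : ∀ j ∈ Icc 1 m, (2*m+1)^2 - (2*j-1)^2 = 4 * ((m + 1 - j) * (m + j)) := by
    intro j hj; simp only [mem_Icc] at hj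
    zify [hj.1, hj.2, show 1 ≤ 2*j by omega, show j ≤ m + 1 by omega,
      Nat.pow_le_pow_left (show 2*j-1 ≤ 2*m+1 by omega) 2]
    ring
  rw [Finset.prod_congr rfl h, Finset.prod_mul_distrib, Finset.prod_mul_distrib,
    Finset.prod_const, Nat.card_Icc, L2]
  have := L1 m m
  simp only [Nat.add_sub_cancel]
  rw [show 2*m = m + m by ring, ← this]
  ring

theorem LB (n i : ℕ) (hi1 : 1 ≤ i) (hin : i ≤ n) :
    (2*i-1).factorial * ∏ j ∈ Icc (i+1) n, ((2*j-1)^2 - (2*i-1)^2)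
    = 4^(n-i) * (n-i).factorial * (n+i-1).factorial := by
  have hmap : Icc (i+1) n = (Icc 1 (n-i)).map (addLeftEmbedding i) := by
    rw [Finset.map_add_left_Icc]
    congr 1; omega
  rw [hmap, Finset.prod_map]
  simp only [addLeftEmbedding_apply]
  have h : ∀ t ∈ Icc 1 (n-i), (2*(i+t)-1)^2 - (2*i-1)^2 = 4 * (t * ((2*i-1) + t)) := by
    intro t ht; simp only [mem_Icc] at ht
    zify [show 1 ≤ 2*i by omega, show 1 ≤ 2*(i+t) by omega,
      Nat.pow_le_pow_left (show 2*i-1 ≤ 2*(i+t)-1 by omega) 2]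
    ring
  rw [Finset.prod_congr rfl h, Finset.prod_mul_distrib, Finset.prod_mul_distrib,
    Finset.prod_const, Nat.card_Icc, prodIcc_id, Nat.add_sub_cancel]
  have := L1 (2*i-1) (n-i)
  rw [show 2*i-1 + (n-i) = n+i-1 by omega] at this
  rw [← this]; ring

theorem lagrange_moment {F : Type*} [Field F] {ι : Type*} [DecidableEq ι] (s : Finset ι)
    (v : ι → F) (hvs : Set.InjOn v s) (f : F[X]) (hf : f.degree < s.card) :
    ∑ i ∈ s, f.eval (v i) * Lagrange.nodalWeight s v i = f.coeff (s.card - 1) := by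
  conv_rhs => rw [Lagrange.eq_interpolate hvs hf]
  rw [Lagrange.interpolate_apply, Polynomial.finset_sum_coeff]
  refine Finset.sum_congr rfl fun i hi => ?_
  rw [Lagrange.basis_eq_prod_sub_inv_mul_nodal_div hi, ← Lagrange.nodal_erase_eq_nodal_div hi,
    ← mul_assoc, ← Polynomial.C_mul, Polynomial.coeff_C_mul]
  have hmon : (Lagrange.nodal (s.erase i) v).Monic := Lagrange.nodal_monic
  have hdeg : (Lagrange.nodal (s.erase i) v).natDegree = s.card - 1 := by
    rw [Lagrange.natDegree_nodal, Finset.card_erase_of_mem hi]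
  rw [← hdeg, hmon.coeff_natDegree, mul_one, mul_comm]

theorem Wprod (n i : ℕ) (h1 : 1 ≤ i) (h2 : i ≤ n) :
    ((2*i-1 : ℕ) : ℝ) * ∏ j ∈ (Icc 1 n).erase i,
      (((2*i-1 : ℕ) : ℝ)^2 - ((2*j-1 : ℕ) : ℝ)^2)
    = (-1 : ℝ)^(n-i) * 4^(n-1) * ((n-i).factorial : ℝ) * ((n+i-1).factorial : ℝ) := by
  have hsplit : (Icc 1 n).erase i = Icc 1 (i-1) ∪ Icc (i+1) n := by
    ext j; simp only [mem_erase, mem_Icc, mem_union]; omega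
  have hdisj : Disjoint (Icc 1 (i-1)) (Icc (i+1) n) := by
    rw [Finset.disjoint_left]; intro a ha hb
    simp only [mem_Icc] at ha hb; omega
  rw [hsplit, Finset.prod_union hdisj]
  -- A part
  have hAnat : ∏ j ∈ Icc 1 (i-1), ((2*i-1)^2 - (2*j-1)^2) = 4^(i-1) * (2*i-2).factorial := by
    apply Nat.eq_of_mul_eq_mul_left (Nat.factorial_pos (i-1))
    have := LA (i-1)
    rw [show 2*(i-1)+1 = 2*i-1 by omega, show 2*(i-1) = 2*i-2 by omega] at this
    rw [this]; ring
  have hA : ∏ j ∈ Icc 1 (i-1), (((2*i-1 : ℕ) : ℝ)^2 - ((2*j-1 : ℕ) : ℝ)^2)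
      = 4^(i-1) * ((2*i-2).factorial : ℝ) := by
    have : ∀ j ∈ Icc 1 (i-1), (((2*i-1 : ℕ) : ℝ)^2 - ((2*j-1 : ℕ) : ℝ)^2)
        = (((2*i-1)^2 - (2*j-1)^2 : ℕ) : ℝ) := by
      intro j hj; simp only [mem_Icc] at hj
      rw [Nat.cast_sub (Nat.pow_le_pow_left (by omega) 2)]
      push_cast; ring
    rw [Finset.prod_congr rfl this, ← Nat.cast_prod, hAnat]
    push_cast; ring
  -- B part
  have hB : ∏ j ∈ Icc (i+1) n, (((2*i-1 : ℕ) : ℝ)^2 - ((2*j-1 : ℕ) : ℝ)^2)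
      = (-1 : ℝ)^(n-i) * ((∏ j ∈ Icc (i+1) n, ((2*j-1)^2 - (2*i-1)^2) : ℕ) : ℝ) := by
    have : ∀ j ∈ Icc (i+1) n, (((2*i-1 : ℕ) : ℝ)^2 - ((2*j-1 : ℕ) : ℝ)^2)
        = -1 * (((2*j-1)^2 - (2*i-1)^2 : ℕ) : ℝ) := by
      intro j hj; simp only [mem_Icc] at hj
      rw [Nat.cast_sub (Nat.pow_le_pow_left (by omega) 2)]
      push_cast; ring
    rw [Finset.prod_congr rfl this, Finset.prod_mul_distrib, Finset.prod_const,
      Nat.card_Icc, ← Nat.cast_prod, show n + 1 - (i+1) = n - i by omega]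
  rw [hA, hB]
  have hLB : ((2*i-1).factorial : ℝ) * ((∏ j ∈ Icc (i+1) n, ((2*j-1)^2 - (2*i-1)^2) : ℕ) : ℝ)
      = 4^(n-i) * ((n-i).factorial : ℝ) * ((n+i-1).factorial : ℝ) := by
    exact_mod_cast congrArg (Nat.cast : ℕ → ℝ) (LB n i h1 h2)
  have hfac : ((2*i-1 : ℕ) : ℝ) * ((2*i-2).factorial : ℝ) = ((2*i-1).factorial : ℝ) := by
    exact_mod_cast congrArg (Nat.cast : ℕ → ℝ)
      (by rw [show 2*i-2 = (2*i-1) - 1 by omega]; exact Nat.mul_factorial_pred (by omega))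
  have hpow : (4:ℝ)^(n-1) = 4^(i-1) * 4^(n-i) := by
    rw [← pow_add]; congr 1; omega
  rw [hpow]
  linear_combination ((-1:ℝ)^(n-i) * 4^(i-1)) * hLB
    + ((-1:ℝ)^(n-i) * 4^(i-1) * ((∏ j ∈ Icc (i+1) n, ((2*j-1)^2 - (2*i-1)^2) : ℕ) : ℝ)) * hfac


theorem cpos (i : ℕ) (hi : 1 ≤ i) : (0:ℝ) < ((2*i-1 : ℕ):ℝ) := by
  exact_mod_cast Nat.pos_of_ne_zero (by omega)

theorem vInj (n : ℕ) : Set.InjOn (fun i : ℕ => ((2*i-1 : ℕ):ℝ)^2) (Icc 1 n) := by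
  intro a ha b hb hab
  simp only [Finset.coe_Icc, Set.mem_Icc] at ha hb
  have ha' := cpos a ha.1; have hb' := cpos b hb.1
  simp only at hab
  have h0 : (((2*a-1:ℕ):ℝ) - ((2*b-1:ℕ):ℝ)) * (((2*a-1:ℕ):ℝ) + ((2*b-1:ℕ):ℝ)) = 0 := by
    linear_combination hab
  rcases mul_eq_zero.mp h0 with h | h
  · have h' : ((2*a-1:ℕ):ℝ) = ((2*b-1:ℕ):ℝ) := by linarith
    have : (2*a-1 : ℕ) = 2*b-1 := Nat.cast_injective h'
    omega
  · linarith

theorem nodalWeight_eq (n i : ℕ) (h1 : 1 ≤ i) (h2 : i ≤ n) :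
    Lagrange.nodalWeight (Icc 1 n) (fun i : ℕ => ((2*i-1:ℕ):ℝ)^2) i
    = ((2*i-1:ℕ):ℝ) / ((-1:ℝ)^(n-i) * 4^(n-1) * ((n-i).factorial:ℝ) * ((n+i-1).factorial:ℝ)) := by
  have hW := Wprod n i h1 h2
  have hD : ((-1:ℝ)^(n-i) * 4^(n-1) * ((n-i).factorial:ℝ) * ((n+i-1).factorial:ℝ)) ≠ 0 := by
    have f1 : ((n-i).factorial:ℝ) > 0 := by exact_mod_cast (n-i).factorial_pos
    have f2 : ((n+i-1).factorial:ℝ) > 0 := by exact_mod_cast (n+i-1).factorial_pos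
    have s1 : ((-1:ℝ)^(n-i)) ≠ 0 := pow_ne_zero _ (by norm_num)
    have s2 : ((4:ℝ)^(n-1)) ≠ 0 := pow_ne_zero _ (by norm_num)
    positivity
  have hc : ((2*i-1:ℕ):ℝ) ≠ 0 := ne_of_gt (cpos i h1)
  have hprodne : (∏ j ∈ (Icc 1 n).erase i,
      (((2*i-1 : ℕ) : ℝ)^2 - ((2*j-1 : ℕ) : ℝ)^2)) ≠ 0 := by
    intro h0
    rw [h0, mul_zero] at hW
    exact hD hW.symm
  rw [Lagrange.nodalWeight, Finset.prod_inv_distrib]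
  rw [eq_div_iff hD, inv_mul_eq_iff_eq_mul₀ hprodne] -- maybe wrong form; iterate
  linear_combination -hW

theorem theta_eq (n i : ℕ) (h1 : 1 ≤ i) (h2 : i ≤ n) :
    (-1 : ℝ)^(i+1) * ((n-1).factorial : ℝ) * (n.factorial : ℝ) /
      (((2*i-1:ℕ):ℝ) * ((n-i).factorial:ℝ) * ((n+i-1).factorial:ℝ))
    = ((-1:ℝ)^(n+1) * 4^(n-1) * ((n-1).factorial:ℝ) * (n.factorial:ℝ))
        * Lagrange.nodalWeight (Icc 1 n) (fun i : ℕ => ((2*i-1:ℕ):ℝ)^2) i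
        * (((2*i-1:ℕ):ℝ)^2)⁻¹ := by
  rw [nodalWeight_eq n i h1 h2]
  have hsign : (-1:ℝ)^(n+1) * (-1)^(n-i) = (-1)^(i+1) := by
    rw [← pow_add, show n+1+(n-i) = (i+1) + 2*(n-i) by omega, pow_add, pow_mul, neg_one_sq,
      one_pow, mul_one]
  set c : ℝ := ((2*i-1:ℕ):ℝ) with hcdef
  set a : ℝ := ((n-1).factorial : ℝ)
  set b : ℝ := (n.factorial : ℝ)
  set f1 : ℝ := ((n-i).factorial : ℝ)
  set f2 : ℝ := ((n+i-1).factorial : ℝ)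
  set sgn : ℝ := (-1:ℝ)^(n-i) with hsdef
  have hc : c ≠ 0 := ne_of_gt (cpos i h1)
  have f1ne : f1 ≠ 0 := Nat.cast_ne_zero.mpr (n-i).factorial_pos.ne'
  have f2ne : f2 ≠ 0 := Nat.cast_ne_zero.mpr (n+i-1).factorial_pos.ne'
  have s1 : sgn ≠ 0 := pow_ne_zero _ (by norm_num)
  have s2 : sgn * sgn = 1 := by
    rw [hsdef, ← pow_add, ← two_mul, pow_mul, neg_one_sq, one_pow]
  have h4 : (4:ℝ)^(n-1) ≠ 0 := pow_ne_zero _ (by norm_num)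
  rw [← hsign]
  field_simp
  have s2' : (-1:ℝ)^((n-i)*2) = 1 := by rw [pow_mul, sq]; exact s2
  linear_combination (a * b) * s2

/-- the odd multicritical parameters
`θ_{2i-1} = (-1)^(i+1) (n-1)! n! / ((2i-1) (n-i)! (n+i-1)!)` for `i = 1,…,n` satisfy
`∑ (2i-1)^(2k) θ_{2i-1} = 0` for `1 ≤ k ≤ n-1` and
`∑ θ_{2i-1} = 2^(4n-2) / (n ⬝ C(2n,n)^2)`. -/
theorem multicritical_o_moments (n : ℕ) (hn : 1 ≤ n)
    (θ : ℕ → ℝ)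
    (hθ : ∀ i, 1 ≤ i → i ≤ n →
      θ (2 * i - 1) = (-1 : ℝ) ^ (i + 1) * ((n - 1).factorial : ℝ) * (n.factorial : ℝ) /
        (((2 * i - 1 : ℕ) : ℝ) * ((n - i).factorial : ℝ) * ((n + i - 1).factorial : ℝ))) :
    (∀ k : ℕ, 1 ≤ k → k ≤ n - 1 →
      ∑ i ∈ Finset.Icc 1 n, ((2 * i - 1 : ℕ) : ℝ) ^ (2 * k) * θ (2 * i - 1) = 0) ∧
    (∑ i ∈ Finset.Icc 1 n, θ (2 * i - 1)
      = 2 ^ (4 * n - 2) / ((n : ℝ) * ((Nat.choose (2 * n) n : ℝ)) ^ 2)) := by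
  classical
  set K : ℝ := (-1:ℝ)^(n+1) * 4^(n-1) * ((n-1).factorial:ℝ) * (n.factorial:ℝ) with hK
  have hcard : (Icc 1 n).card = n := by rw [Nat.card_Icc]; omega
  constructor
  · -- moments
    intro k hk1 hk2
    have hn2 : 2 ≤ n := by omega
    have hstep : ∀ i ∈ Icc 1 n, ((2 * i - 1 : ℕ) : ℝ) ^ (2 * k) * θ (2 * i - 1)
        = K * ((X^(k-1) : ℝ[X]).eval ((fun i : ℕ => ((2*i-1:ℕ):ℝ)^2) i)
            * Lagrange.nodalWeight (Icc 1 n) (fun i : ℕ => ((2*i-1:ℕ):ℝ)^2) i) := by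
      intro i hi
      simp only [mem_Icc] at hi
      rw [hθ i hi.1 hi.2, theta_eq n i hi.1 hi.2, eval_pow, eval_X]
      have hc : ((2*i-1:ℕ):ℝ) ≠ 0 := ne_of_gt (cpos i hi.1)
      have hk' : (((2*i-1:ℕ):ℝ)^2)^k = (((2*i-1:ℕ):ℝ)^2)^(k-1) * ((2*i-1:ℕ):ℝ)^2 := by
        rw [← pow_succ]; congr 1; omega
      rw [show 2*k = k*2 by ring, pow_mul, show (((2*i-1:ℕ):ℝ)^k)^2 = (((2*i-1:ℕ):ℝ)^2)^k by
        rw [← pow_mul, ← pow_mul, mul_comm k 2], hk']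
      field_simp
      ring
    rw [Finset.sum_congr rfl hstep, ← Finset.mul_sum,
      lagrange_moment (Icc 1 n) _ (vInj n) (X^(k-1))
        (by rw [Polynomial.degree_X_pow, hcard]; exact_mod_cast (by omega : k-1 < n)),
      Polynomial.coeff_X_pow, hcard]
    have h1 : ¬ (k-1 = n-1) := by omega
    have h2 : ¬ (n-1 = k-1) := by omega
    simp [h1, h2]
  · -- the sum
    have hne : (Icc 1 n).Nonempty := ⟨1, by simp only [mem_Icc]; omega⟩
    have hx : ∀ i ∈ Icc 1 n, (0:ℝ) ≠ ((fun i : ℕ => ((2*i-1:ℕ):ℝ)^2) i) := by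
      intro i hi
      simp only [mem_Icc] at hi
      have := cpos i hi.1
      simp only
      intro h; nlinarith
    have hbar := Lagrange.eval_interpolate_not_at_node (s := Icc 1 n)
      (v := fun i : ℕ => ((2*i-1:ℕ):ℝ)^2) (x := 0) 1 hx
    rw [Lagrange.interpolate_one (vInj n) hne, eval_one, Lagrange.eval_nodal] at hbar
    set Q : ℝ := ((∏ i ∈ Icc 1 n, (2*i-1) : ℕ) : ℝ) with hQ
    have hQpos : 0 < Q := by
      rw [hQ]
      have : 0 < ∏ i ∈ Icc 1 n, (2*i-1) := by
        apply Finset.prod_pos; intro i hi; simp only [mem_Icc] at hi; omega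
      exact_mod_cast this
    have hprod : ∏ i ∈ Icc 1 n, ((0:ℝ) - ((2*i-1:ℕ):ℝ)^2) = (-1)^n * Q^2 := by
      have : ∀ i ∈ Icc 1 n, ((0:ℝ) - ((2*i-1:ℕ):ℝ)^2) = (-1) * ((2*i-1:ℕ):ℝ)^2 := by
        intro i _; ring
      rw [Finset.prod_congr rfl this, Finset.prod_mul_distrib, Finset.prod_const, hcard,
        Finset.prod_pow, hQ, ← Nat.cast_prod]
    rw [hprod] at hbar
    have hstep : ∀ i ∈ Icc 1 n, θ (2*i-1)
        = (-K) * (Lagrange.nodalWeight (Icc 1 n) (fun i : ℕ => ((2*i-1:ℕ):ℝ)^2) i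
            * ((0:ℝ) - ((2*i-1:ℕ):ℝ)^2)⁻¹ * (1 : ℕ → ℝ) i) := by
      intro i hi
      simp only [mem_Icc] at hi
      rw [hθ i hi.1 hi.2, theta_eq n i hi.1 hi.2, Pi.one_apply]
      rw [show ((0:ℝ) - ((2*i-1:ℕ):ℝ)^2) = -(((2*i-1:ℕ):ℝ)^2) by ring]
      rw [inv_neg]
      ring
    rw [Finset.sum_congr rfl hstep, ← Finset.mul_sum]
    -- now use hbar to evaluate the sum
    have hQ2 : ((-1:ℝ)^n * Q^2) ≠ 0 := by
      apply mul_ne_zero (pow_ne_zero _ (by norm_num)) (pow_ne_zero _ hQpos.ne')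
    have hsval : ∑ i ∈ Icc 1 n, (Lagrange.nodalWeight (Icc 1 n)
          (fun i : ℕ => ((2*i-1:ℕ):ℝ)^2) i * ((0:ℝ) - ((2*i-1:ℕ):ℝ)^2)⁻¹ * (1 : ℕ → ℝ) i)
        = ((-1:ℝ)^n * Q^2)⁻¹ := eq_inv_of_mul_eq_one_right hbar.symm
    rw [hsval]
    -- final numeric identity
    have hLC : (2:ℝ)^n * (n.factorial : ℝ) * Q = ((2*n).factorial : ℝ) := by
      rw [hQ]; exact_mod_cast congrArg (Nat.cast : ℕ → ℝ) (LC n)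
    have hch : (((2*n).choose n : ℕ) : ℝ) * ((n.factorial:ℝ) * (n.factorial:ℝ))
        = ((2*n).factorial : ℝ) := by
      have h0 := Nat.choose_mul_factorial_mul_factorial (show n ≤ 2*n by omega)
      rw [show 2*n-n = n by omega] at h0
      have h1 : (2*n).choose n * (n.factorial * n.factorial) = (2*n).factorial := by
        rw [← mul_assoc]; exact h0
      exact_mod_cast congrArg (Nat.cast : ℕ → ℝ) h1
    have hnf : (n:ℝ) * ((n-1).factorial : ℝ) = (n.factorial : ℝ) := by
      exact_mod_cast congrArg (Nat.cast : ℕ → ℝ) (Nat.mul_factorial_pred (by omega))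
    have h2pow : (2:ℝ)^(4*n-2) = 4^(n-1) * (2^n) * (2^n) := by
      rw [show (4:ℝ) = 2^2 by norm_num, ← pow_mul, ← pow_add, ← pow_add]
      congr 1; omega
    have hsgn : (-1:ℝ)^(n+1) = (-1)^n * (-1) := pow_succ _ _
    have hnne : (n:ℝ) ≠ 0 := Nat.cast_ne_zero.mpr (by omega)
    have hfne : (n.factorial : ℝ) ≠ 0 := Nat.cast_ne_zero.mpr n.factorial_pos.ne'
    have hchne : (((2*n).choose n : ℕ) : ℝ) ≠ 0 :=
      Nat.cast_ne_zero.mpr (Nat.choose_pos (by omega)).ne'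
    have hbq : (((2*n).choose n : ℕ) : ℝ) * (n.factorial:ℝ) = 2^n * Q := by
      apply mul_left_cancel₀ hfne
      linear_combination hch - hLC
    have hden : (n:ℝ) * (((2*n).choose n : ℕ) : ℝ)^2 ≠ 0 :=
      mul_ne_zero hnne (pow_ne_zero _ hchne)
    rw [← div_eq_mul_inv, div_eq_div_iff hQ2 hden, hK, h2pow, hsgn]
    linear_combination ((-1:ℝ)^n * 4^(n-1) * (((2*n).choose n : ℕ) : ℝ)^2 * (n.factorial:ℝ)) * hnf
      + ((-1:ℝ)^n * 4^(n-1) * ((((2*n).choose n : ℕ) : ℝ) * (n.factorial:ℝ) + 2^n * Q)) * hbq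
end

section
/- Heine–Szegő identity: for a Laurent series symbol f(z) = ∑_{k∈Z} f_k z^k with f(z) = exp(Ṽ(z + z^{-1})) for a polynomial Ṽ, the ℓ×ℓ Toeplitz determinant det_{1≤i,j≤ℓ}(f_{j−i}) equals the Haar-measure expectation E_{U ∈ U(ℓ)}[ exp tr Ṽ(U + U*) ] over the unitary group U(ℓ). -/
open scoped BigOperators
open MeasureTheory

namespace HeineSzegoAux

open Complex

noncomputable def gg (W : Polynomial ℂ) (φ : ℝ) : ℂ :=
  Complex.exp (W.eval (Complex.exp (Complex.I * φ) + (Complex.exp (Complex.I * φ))⁻¹))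

lemma continuous_gg (W : Polynomial ℂ) : Continuous (gg W) := by
  have hz : Continuous fun φ : ℝ => Complex.exp (Complex.I * φ) :=
    Complex.continuous_exp.comp (continuous_const.mul Complex.continuous_ofReal)
  have hzi : Continuous fun φ : ℝ => (Complex.exp (Complex.I * φ))⁻¹ :=
    hz.inv₀ (fun x => Complex.exp_ne_zero _)
  exact Complex.continuous_exp.comp ((W.continuous_aeval).comp (hz.add hzi))

def S : Set ℝ := Set.Icc 0 (2 * Real.pi)

def box (ℓ : ℕ) : Set (Fin ℓ → ℝ) := Set.univ.pi fun _ => S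

lemma measurableSet_box (ℓ : ℕ) : MeasurableSet (box ℓ) :=
  MeasurableSet.univ_pi fun _ => measurableSet_Icc

lemma integrableOn_box {ℓ : ℕ} {F : (Fin ℓ → ℝ) → ℂ} (hF : Continuous F) :
    IntegrableOn F (box ℓ) :=
  hF.continuousOn.integrableOn_compact (isCompact_univ_pi fun _ => isCompact_Icc)

/-- Fubini for the box -/
lemma prod_setIntegral (ℓ : ℕ) (h : Fin ℓ → ℝ → ℂ) :
    ∏ i, ∫ φ in S, h i φ = ∫ φ in box ℓ, ∏ i, h i (φ i) := by
  have h1 : ∀ i, ∫ φ in S, h i φ = ∫ φ, S.indicator (h i) φ := fun i =>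
    (integral_indicator measurableSet_Icc).symm
  simp_rw [h1]
  rw [← MeasureTheory.integral_fintype_prod_eq_prod (fun i => S.indicator (h i))]
  rw [← integral_indicator (measurableSet_box ℓ)]
  congr 1
  funext x
  by_cases hx : x ∈ box ℓ
  · rw [Set.indicator_of_mem hx]
    have : ∀ i, x i ∈ S := fun i => hx i (Set.mem_univ i)
    exact Finset.prod_congr rfl fun i _ => Set.indicator_of_mem (this i) (h i)
  · rw [Set.indicator_of_notMem hx]
    obtain ⟨i, hi⟩ : ∃ i, x i ∉ S := by
      simpa [box, Set.mem_pi] using hx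
    apply Finset.prod_eq_zero (Finset.mem_univ i)
    exact Set.indicator_of_notMem hi (h i)

/-- change of variables by coordinate permutation -/
lemma setIntegral_perm {ℓ : ℕ} (τ : Equiv.Perm (Fin ℓ)) (F : (Fin ℓ → ℝ) → ℂ) :
    ∫ φ in box ℓ, F φ = ∫ φ in box ℓ, F (φ ∘ τ) := by
  set e : Fin ℓ ≃ Fin ℓ := τ⁻¹ with he
  have hmp : MeasurePreserving (MeasurableEquiv.piCongrLeft (fun _ : Fin ℓ => ℝ) e)
      (Measure.pi fun _ => volume) (Measure.pi fun _ => volume) :=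
    measurePreserving_piCongrLeft (fun _ => volume) e
  have hT : ∀ x : Fin ℓ → ℝ, (MeasurableEquiv.piCongrLeft (fun _ : Fin ℓ => ℝ) e) x = x ∘ τ := by
    intro x
    funext b
    have h1 := Equiv.piCongrLeft_apply_apply (fun _ : Fin ℓ => ℝ) e x (e.symm b)
    rw [Equiv.apply_symm_apply] at h1
    show (MeasurableEquiv.piCongrLeft (fun _ : Fin ℓ => ℝ) e) x b = x (τ b)
    rw [MeasurableEquiv.coe_piCongrLeft]
    have h2 : e.symm b = τ b := by simp [he, Equiv.Perm.inv_def]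
    rw [h2] at h1
    exact h1
  have hpre : (MeasurableEquiv.piCongrLeft (fun _ : Fin ℓ => ℝ) e) ⁻¹' (box ℓ) = box ℓ := by
    ext x
    simp only [Set.mem_preimage, hT]
    constructor
    · intro h i _
      have := h (τ.symm i) (Set.mem_univ _)
      simpa using this
    · intro h i _
      exact h (τ i) (Set.mem_univ _)
  have key := hmp.setIntegral_preimage_emb
    (MeasurableEquiv.measurableEmbedding _) F (box ℓ)
  rw [hpre] at key
  simp_rw [hT] at key
  have hvol : (volume : Measure (Fin ℓ → ℝ)) = Measure.pi fun _ => volume := by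
    rw [volume_pi]
  rw [hvol]
  exact key.symm

lemma prod_pairs {ℓ : ℕ} (F : Fin ℓ → Fin ℓ → ℝ) :
    ∏ i, ∏ j ∈ Finset.Ioi i, F i j
      = ∏ p ∈ Finset.univ.filter (fun p : Fin ℓ × Fin ℓ => p.1 < p.2), F p.1 p.2 := by
  rw [Finset.prod_sigma']
  exact Finset.prod_nbij' (fun p => (p.1, p.2)) (fun p => ⟨p.1, p.2⟩)
    (by simp [Finset.mem_Ioi]) (by simp [Finset.mem_Ioi]) (by simp) (by simp) (by simp)


open Equiv in
lemma sum_perm_eq {ℓ : ℕ} (φ : Fin ℓ → ℝ) :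
    ∑ τ : Equiv.Perm (Fin ℓ),
      Matrix.det (Matrix.of fun j i : Fin ℓ =>
        Complex.exp (-(Complex.I * ((i:ℤ) - (j:ℤ)) * φ (τ i))))
    = ((∏ i, ∏ j ∈ Finset.Ioi i,
        ‖Complex.exp (Complex.I * φ j) - Complex.exp (Complex.I * φ i)‖ ^ 2 : ℝ) : ℂ) := by
  classical
  set z : Fin ℓ → ℂ := fun k => Complex.exp (Complex.I * φ k) with hzdef
  set w : Fin ℓ → ℂ := fun k => Complex.exp (-(Complex.I * φ k)) with hwdef
  set C : Matrix (Fin ℓ) (Fin ℓ) ℂ :=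
    Matrix.of (fun j k : Fin ℓ => Complex.exp (Complex.I * (j : ℕ) * φ k)) with hCdef
  set D : Matrix (Fin ℓ) (Fin ℓ) ℂ :=
    Matrix.of (fun r c : Fin ℓ => Complex.exp (-(Complex.I * (c : ℕ) * φ r))) with hDdef
  have hdet : ∀ τ : Equiv.Perm (Fin ℓ),
      Matrix.det (Matrix.of fun j i : Fin ℓ =>
        Complex.exp (-(Complex.I * ((i:ℤ) - (j:ℤ)) * φ (τ i))))
      = C.det * (((Equiv.Perm.sign τ : ℤ) : ℂ) * ∏ i, D (τ i) i) := by
    intro τ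
    have h1 : (Matrix.of fun j i : Fin ℓ =>
        Complex.exp (-(Complex.I * ((i:ℤ) - (j:ℤ)) * φ (τ i))))
        = Matrix.of (fun j i : Fin ℓ =>
            (fun i : Fin ℓ => Complex.exp (-(Complex.I * (i : ℕ) * φ (τ i)))) i
              * (C.submatrix id τ) j i) := by
      ext j i
      simp only [Matrix.of_apply, Matrix.submatrix_apply, hCdef, id_eq]
      rw [← Complex.exp_add]
      congr 1
      push_cast
      ring
    rw [h1, Matrix.det_mul_row, Matrix.det_permute']
    have hsign : ((Equiv.Perm.sign τ : ℤˣ) : ℂ) = (((Equiv.Perm.sign τ : ℤˣ) : ℤ) : ℂ) := by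
      simp
    have hDi : ∀ i : Fin ℓ, D (τ i) i = Complex.exp (-(Complex.I * (i : ℕ) * φ (τ i))) := by
      intro i; simp [hDdef]
    simp_rw [hDi]
    rw [hsign]
    ring
  simp_rw [hdet]
  rw [← Finset.mul_sum, ← Matrix.det_apply']
  -- identify C and D with (transposed) Vandermonde matrices
  have hC : C.det = ∏ i, ∏ j ∈ Finset.Ioi i, (z j - z i) := by
    have h2 : C = (Matrix.vandermonde z).transpose := by
      ext j k
      simp only [hCdef, Matrix.of_apply, Matrix.transpose_apply, Matrix.vandermonde_apply, hzdef]
      rw [← Complex.exp_nat_mul]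
      congr 1
      ring
    rw [h2, Matrix.det_transpose, Matrix.det_vandermonde]
  have hD : D.det = ∏ i, ∏ j ∈ Finset.Ioi i, (w j - w i) := by
    have h2 : D = Matrix.vandermonde w := by
      ext r c
      simp only [hDdef, Matrix.of_apply, Matrix.vandermonde_apply, hwdef]
      rw [← Complex.exp_nat_mul]
      congr 1
      ring
    rw [h2, Matrix.det_vandermonde]
  rw [hC, hD, ← Finset.prod_mul_distrib]
  push_cast
  apply Finset.prod_congr rfl
  intro i _
  rw [← Finset.prod_mul_distrib]
  apply Finset.prod_congr rfl
  intro j _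
  have hwz : ∀ k, w k = (starRingEnd ℂ) (z k) := by
    intro k
    simp only [hzdef, hwdef]
    rw [← Complex.exp_conj]
    congr 1
    simp [Complex.conj_ofReal]
  rw [hwz, hwz, ← map_sub, Complex.mul_conj, ← Complex.sq_norm]
  push_cast
  ring

/-- continuity helper -/
lemma cont_prod_exp {ℓ : ℕ} (W : Polynomial ℂ) (k : Fin ℓ → ℂ) :
    Continuous fun φ : Fin ℓ → ℝ =>
      ∏ i, (gg W (φ i) * Complex.exp (-(Complex.I * k i * φ i))) := by
  apply continuous_finset_prod
  intro i _
  exact ((continuous_gg W).comp (continuous_apply i)).mul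
    (Complex.continuous_exp.comp
      ((continuous_const.mul (Complex.continuous_ofReal.comp (continuous_apply i))).neg))

lemma cont_H {ℓ : ℕ} (W : Polynomial ℂ) :
    Continuous fun φ : Fin ℓ → ℝ =>
      (∏ i, gg W (φ i)) *
        (Matrix.of fun j i : Fin ℓ =>
          Complex.exp (-(Complex.I * ((i:ℤ) - (j:ℤ)) * φ i))).det := by
  apply Continuous.mul
  · exact continuous_finset_prod _ fun i _ => (continuous_gg W).comp (continuous_apply i)
  · apply Continuous.matrix_det
    apply continuous_matrix
    intro j i
    exact Complex.continuous_exp.comp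
      ((continuous_const.mul (Complex.continuous_ofReal.comp (continuous_apply i))).neg)

end HeineSzegoAux

open HeineSzegoAux in
/-- Heine–Szegő identity: for the symbol `f(z) = exp (Ṽ(z + z⁻¹))` with `Ṽ` a
polynomial, the `ℓ×ℓ` Toeplitz determinant `det (f_{j-i})` equals the Haar expectation
`E_{U ∈ U(ℓ)} [exp tr Ṽ(U + U*)]`, written here in eigenvalue coordinates via the Weyl
integration formula:
`det (f_{j-i}) = (1/ℓ!) ∫ ∏_{j<k} |e^{iφ_j} - e^{iφ_k}|² ∏_j f(e^{iφ_j}) ∏_j dφ_j/(2π)`. -/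
theorem heine_szego (ℓ : ℕ) (W : Polynomial ℂ)
    (f : ℤ → ℂ)
    (hf : ∀ k : ℤ, f k = (1 / (2 * (Real.pi : ℂ))) *
      ∫ φ in (0 : ℝ)..(2 * Real.pi),
        Complex.exp (W.eval (Complex.exp (Complex.I * φ) + (Complex.exp (Complex.I * φ))⁻¹))
          * Complex.exp (-(Complex.I * k * φ))) :
    Matrix.det (Matrix.of fun i j : Fin ℓ => f ((j : ℤ) - (i : ℤ)))
      = (1 / (Nat.factorial ℓ : ℂ)) * (1 / (2 * (Real.pi : ℂ))) ^ ℓ *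
        ∫ φ : Fin ℓ → ℝ in Set.univ.pi (fun _ => Set.Icc (0 : ℝ) (2 * Real.pi)),
          ((∏ p ∈ Finset.univ.filter (fun p : Fin ℓ × Fin ℓ => p.1 < p.2),
              ‖Complex.exp (Complex.I * φ p.1)
                - Complex.exp (Complex.I * φ p.2)‖ ^ 2 : ℝ) : ℂ)
          * ∏ j : Fin ℓ,
              Complex.exp (W.eval (Complex.exp (Complex.I * φ j)
                + (Complex.exp (Complex.I * φ j))⁻¹)) := by
  classical
  set c : ℂ := 1 / (2 * (Real.pi : ℂ)) with hc
  -- rewrite the Fourier coefficients as integrals over `S = Icc 0 (2π)`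
  have hf' : ∀ k : ℤ, f k = c * ∫ φ in S, gg W φ * Complex.exp (-(Complex.I * k * φ)) := by
    intro k
    rw [hf k, hc]
    congr 1
    rw [intervalIntegral.integral_of_le (by positivity)]
    rw [← MeasureTheory.integral_Icc_eq_integral_Ioc]
    rfl
  set H : (Fin ℓ → ℝ) → ℂ := fun φ =>
    (∏ i, gg W (φ i)) *
      (Matrix.of fun j i : Fin ℓ =>
        Complex.exp (-(Complex.I * ((i:ℤ) - (j:ℤ)) * φ i))).det with hH
  set V : (Fin ℓ → ℝ) → ℂ := fun φ =>
    ((∏ i, ∏ j ∈ Finset.Ioi i,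
        ‖Complex.exp (Complex.I * φ j) - Complex.exp (Complex.I * φ i)‖ ^ 2 : ℝ) : ℂ)
    with hV
  -- STEP 1 : expand the determinant, Fubini
  have hprod : ∀ σ : Equiv.Perm (Fin ℓ),
      (∏ i : Fin ℓ, f ((i:ℤ) - ((σ i : Fin ℓ):ℤ)))
        = c ^ ℓ * ∫ φ in box ℓ, ∏ i : Fin ℓ,
            (gg W (φ i) * Complex.exp
              (-(Complex.I * (((i:ℤ) - ((σ i : Fin ℓ):ℤ) : ℤ) : ℂ) * φ i))) := by
    intro σ
    have h2 := prod_setIntegral ℓ (fun i φ => gg W φ * Complex.exp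
      (-(Complex.I * (((i:ℤ) - ((σ i : Fin ℓ):ℤ) : ℤ) : ℂ) * φ)))
    calc (∏ i : Fin ℓ, f ((i:ℤ) - ((σ i : Fin ℓ):ℤ)))
        = ∏ i : Fin ℓ, (c * ∫ φ in S, gg W φ * Complex.exp
            (-(Complex.I * (((i:ℤ) - ((σ i : Fin ℓ):ℤ) : ℤ) : ℂ) * φ))) :=
          Finset.prod_congr rfl fun i _ => hf' _
      _ = c ^ ℓ * ∏ i : Fin ℓ, ∫ φ in S, gg W φ * Complex.exp
            (-(Complex.I * (((i:ℤ) - ((σ i : Fin ℓ):ℤ) : ℤ) : ℂ) * φ)) := by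
          rw [Finset.prod_mul_distrib, Finset.prod_const, Finset.card_univ, Fintype.card_fin]
      _ = _ := by rw [h2]
  have step1 : (Matrix.of fun i j : Fin ℓ => f ((j : ℤ) - (i : ℤ))).det
      = c ^ ℓ * ∫ φ in box ℓ, H φ := by
    rw [Matrix.det_apply']
    simp only [Matrix.of_apply]
    calc ∑ σ : Equiv.Perm (Fin ℓ), ((Equiv.Perm.sign σ : ℤ) : ℂ) * ∏ i : Fin ℓ, f ((i:ℤ) - ((σ i : Fin ℓ):ℤ))
        = ∑ σ : Equiv.Perm (Fin ℓ), c ^ ℓ * ∫ φ in box ℓ,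
            ((Equiv.Perm.sign σ : ℤ) : ℂ) * ∏ i : Fin ℓ,
              (gg W (φ i) * Complex.exp
                (-(Complex.I * (((i:ℤ) - ((σ i : Fin ℓ):ℤ) : ℤ) : ℂ) * φ i))) := by
          refine Finset.sum_congr rfl fun σ _ => ?_
          rw [hprod σ, MeasureTheory.integral_const_mul]
          ring
      _ = c ^ ℓ * ∫ φ in box ℓ, ∑ σ : Equiv.Perm (Fin ℓ),
            ((Equiv.Perm.sign σ : ℤ) : ℂ) * ∏ i : Fin ℓ,
              (gg W (φ i) * Complex.exp
                (-(Complex.I * (((i:ℤ) - ((σ i : Fin ℓ):ℤ) : ℤ) : ℂ) * φ i))) := by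
          rw [← Finset.mul_sum]
          congr 1
          rw [MeasureTheory.integral_finset_sum]
          intro σ _
          exact (integrableOn_box (cont_prod_exp W _)).const_mul _
      _ = c ^ ℓ * ∫ φ in box ℓ, H φ := by
          congr 1
          refine MeasureTheory.integral_congr_ae (Filter.Eventually.of_forall fun φ => ?_)
          rw [hH]
          simp only []
          rw [Matrix.det_apply', Finset.mul_sum]
          refine Finset.sum_congr rfl fun σ _ => ?_
          rw [Finset.prod_mul_distrib]
          simp only [Matrix.of_apply]
          push_cast
          ring
  -- STEP 2 : symmetrization
  have hfact : ((ℓ.factorial : ℕ) : ℂ) ≠ 0 := by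
    exact_mod_cast Nat.cast_ne_zero.mpr (Nat.factorial_ne_zero ℓ)
  have step2 : ((ℓ.factorial : ℕ) : ℂ) * ∫ φ in box ℓ, H φ
      = ∫ φ in box ℓ, V φ * ∏ i, gg W (φ i) := by
    have h1 : ∀ τ : Equiv.Perm (Fin ℓ),
        (∫ φ in box ℓ, H φ) = ∫ φ in box ℓ, H (φ ∘ τ) := fun τ => setIntegral_perm τ H
    have h2 : ∑ τ : Equiv.Perm (Fin ℓ), (∫ φ in box ℓ, H (φ ∘ τ))
        = ((ℓ.factorial : ℕ) : ℂ) * ∫ φ in box ℓ, H φ := by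
      rw [Finset.sum_congr rfl fun τ _ => (h1 τ).symm]
      rw [Finset.sum_const, Finset.card_univ, Fintype.card_perm, Fintype.card_fin, nsmul_eq_mul]
    rw [← h2]
    rw [← MeasureTheory.integral_finset_sum]
    · refine MeasureTheory.integral_congr_ae (Filter.Eventually.of_forall fun φ => ?_)
      simp only [hH, Function.comp]
      have h3 : ∀ τ : Equiv.Perm (Fin ℓ),
          (∏ i, gg W (φ (τ i))) = ∏ i, gg W (φ i) := fun τ =>
        Equiv.prod_comp τ (fun i => gg W (φ i))
      simp_rw [h3]
      rw [← Finset.mul_sum, sum_perm_eq φ, hV]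
      ring
    · intro τ _
      exact integrableOn_box ((cont_H W).comp
        (continuous_pi fun i => continuous_apply (τ i)))
  -- assemble
  have hfinal : (∫ φ in box ℓ, H φ)
      = (1 / ((ℓ.factorial : ℕ) : ℂ)) * ∫ φ in box ℓ, V φ * ∏ i, gg W (φ i) := by
    rw [← step2]
    field_simp
  show (Matrix.of fun i j : Fin ℓ => f ((j : ℤ) - (i : ℤ))).det
      = (1 / ((ℓ.factorial : ℕ) : ℂ)) * c ^ ℓ *
        ∫ φ in box ℓ,
          ((∏ p ∈ Finset.univ.filter (fun p : Fin ℓ × Fin ℓ => p.1 < p.2),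
              ‖Complex.exp (Complex.I * φ p.1)
                - Complex.exp (Complex.I * φ p.2)‖ ^ 2 : ℝ) : ℂ)
          * ∏ j : Fin ℓ, gg W (φ j)
  have hVeq : ∀ φ : Fin ℓ → ℝ, V φ =
      ((∏ p ∈ Finset.univ.filter (fun p : Fin ℓ × Fin ℓ => p.1 < p.2),
          ‖Complex.exp (Complex.I * φ p.1)
            - Complex.exp (Complex.I * φ p.2)‖ ^ 2 : ℝ) : ℂ) := by
    intro φ
    rw [hV]
    rw [← prod_pairs (F := fun i j => ‖
      (Complex.exp (Complex.I * φ i) - Complex.exp (Complex.I * φ j))‖ ^ 2)]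
    simp only []
    norm_cast
    refine Finset.prod_congr rfl fun i _ => Finset.prod_congr rfl fun j _ => ?_
    rw [norm_sub_rev]
  simp_rw [← hVeq]
  rw [step1, hfinal]
  ring
end
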